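/- De Morgan at the measure level: for formulas α and β, μ(¬(α ∨ β)) = μ(¬α)·μ(¬β). -/
import Mathlib


/-- Propositional formulas built from atoms via ¬, ∨, →. -/
inductive Formula (A : Type) : Type
  | atom : A → Formula A
  | neg  : Formula A → Formula A
  | orr  : Formula A → Formula A → Formula A
  | imp  : Formula A → Formula A → Formula A
deriving DecidableEq

/-- Well-formed sequences over a collection `V` of truth valuations. -/
inductive WFS (V : Type) : Type
  | leaf : V → WFS V
  | pair : WFS V → WFS V → WFS V
deriving DecidableEq

/-- Association between a WFS and a formula. -/
def Assoc {V A : Type} : WFS V → Formula A → Prop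
  | WFS.leaf _, Formula.atom _ => True
  | s, Formula.neg β => Assoc s β
  | WFS.pair s₁ s₂, Formula.orr α β => Assoc s₁ α ∧ Assoc s₂ β
  | WFS.pair s₁ s₂, Formula.imp α β => Assoc s₁ α ∧ Assoc s₂ β
  | _, _ => False

/-- Justification of a formula by a WFS (PML semantics). -/
def Justif {V A : Type} (val : V → A → Bool) : WFS V → Formula A → Prop
  | WFS.leaf v, Formula.atom a => val v a = true
  | s, Formula.neg β => ¬ Justif val s β
  | WFS.pair s₁ s₂, Formula.orr α β => Justif val s₁ α ∨ Justif val s₂ β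
  | WFS.pair s₁ s₂, Formula.imp α β => ¬ Justif val s₁ α ∨ Justif val s₂ β
  | _, _ => False

/-- Multiplicative weight allotment extending a basic weight distribution. -/
def weight {V : Type} (pbar : V → ℝ) : WFS V → ℝ
  | WFS.leaf v => pbar v
  | WFS.pair s₁ s₂ => weight pbar s₁ * weight pbar s₂

/-- The (finite) set of WFS associated to a formula. -/
def assocSeqs {V A : Type} [Fintype V] [DecidableEq V] : Formula A → Finset (WFS V)
  | Formula.atom _ => Finset.univ.image WFS.leaf
  | Formula.neg β => assocSeqs β
  | Formula.orr α β => (assocSeqs α ×ˢ assocSeqs β).image fun q => WFS.pair q.1 q.2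
  | Formula.imp α β => (assocSeqs α ×ˢ assocSeqs β).image fun q => WFS.pair q.1 q.2

-- The logical measure of a formula: total weight of associated justifying sequences.
open scoped Classical in
noncomputable def mu {V A : Type} [Fintype V] [DecidableEq V]
    (pbar : V → ℝ) (val : V → A → Bool) (φ : Formula A) : ℝ :=
  ∑ s ∈ (assocSeqs φ).filter (fun s => Justif val s φ), weight pbar s

/-- Derived conjunction: α ∧ β := ¬(¬α ∨ ¬β). -/
def Formula.conj {A : Type} (α β : Formula A) : Formula A :=
  Formula.neg (Formula.orr (Formula.neg α) (Formula.neg β))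

/-- Classical Boolean semantics. -/
def evalF {A : Type} (v : A → Bool) : Formula A → Bool
  | Formula.atom a => v a
  | Formula.neg α => !(evalF v α)
  | Formula.orr α β => evalF v α || evalF v β
  | Formula.imp α β => !(evalF v α) || evalF v β

/-- Diagonal sequence: the valuation `v` at every leaf position of a formula. -/
def diag {V A : Type} (v : V) : Formula A → WFS V
  | Formula.atom _ => WFS.leaf v
  | Formula.neg α => diag v α
  | Formula.orr α β => WFS.pair (diag v α) (diag v β)
  | Formula.imp α β => WFS.pair (diag v α) (diag v β)

/-- Number of atom occurrences in a formula. -/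
def numAtoms {A : Type} : Formula A → ℕ
  | Formula.atom _ => 1
  | Formula.neg α => numAtoms α
  | Formula.orr α β => numAtoms α + numAtoms β
  | Formula.imp α β => numAtoms α + numAtoms β

/-- De Morgan at the measure level: μ(¬(α∨β)) = μ(¬α)·μ(¬β). -/
theorem stmt17 {V A : Type} [Fintype V] [DecidableEq V] (pbar : V → ℝ)
    (val : V → A → Bool)
    (hnn : ∀ v, 0 ≤ pbar v) (hsum : ∑ v, pbar v = 1) (α β : Formula A) :
    mu pbar val (Formula.neg (Formula.orr α β))
      = mu pbar val (Formula.neg α) * mu pbar val (Formula.neg β) := by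
  classical
  have hmu : ∀ γ : Formula A, mu pbar val (Formula.neg γ)
      = ∑ s ∈ (assocSeqs γ : Finset (WFS V)).filter (fun s => ¬ Justif val s γ),
          weight pbar s := by
    intro γ
    rw [mu]
    show ∑ s ∈ (assocSeqs γ : Finset (WFS V)).filter
        (fun s => Justif val s (Formula.neg γ)), weight pbar s = _
    congr 1
    apply Finset.filter_congr
    intro s _
    cases s <;> rfl
  rw [hmu, hmu, hmu]
  have h1 : (assocSeqs (Formula.orr α β) : Finset (WFS V)).filter
        (fun s => ¬ Justif val s (Formula.orr α β))
      = ((assocSeqs α ×ˢ assocSeqs β).filter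
          (fun q => (¬ Justif val q.1 α) ∧ (¬ Justif val q.2 β))).image
          (fun q => WFS.pair q.1 q.2) := by
    show ((assocSeqs α ×ˢ assocSeqs β).image (fun q => WFS.pair q.1 q.2)).filter _ = _
    rw [Finset.filter_image]
    congr 1
    apply Finset.filter_congr
    intro q _
    show ¬ Justif val (WFS.pair q.1 q.2) (Formula.orr α β) ↔ _
    show ¬ (Justif val q.1 α ∨ Justif val q.2 β) ↔ _
    exact not_or
  rw [h1, Finset.sum_image]
  · rw [Finset.filter_product (p := fun s => ¬ Justif val s α) (q := fun s => ¬ Justif val s β), Finset.sum_product]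
    simp only [weight]
    rw [← Finset.sum_mul_sum]
  · intro a _ b _ h
    cases a; cases b
    simpa using h
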